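/- Suppose probability measures P⁽⁰⁾,…,P⁽ᵀ⁾ over inputs satisfy the task-coverage condition: for every representation g in class G, the Schur complement matrices satisfy Σ̄_g⁽⁰⁾ ⪯ μ_X Σ̄_g⁽ᵗ⁾ for all t ∈ [T]. Let F★⁽ᵗ⁾ be the optimal linear heads, set 𝐅★^{1:T} = (1/T)Σ_t F★⁽ᵗ⁾ᵀF★⁽ᵗ⁾ and 𝐅★⁽⁰⁾ = F★⁽⁰⁾ᵀF★⁽⁰⁾, assume range(𝐅★⁽⁰⁾) ⊆ range(𝐅★^{1:T}), and define μ_F = ‖(𝐅★^{1:T})^{†/2} 𝐅★⁽⁰⁾ (𝐅★^{1:T})^{†/2}‖₂. Then for every g ∈ G: inf_F E⁽⁰⁾‖F g(X) − F★⁽⁰⁾ g★(X)‖₂² ≤ (μ_X μ_F / T) Σ_{t=1}^T inf_F E⁽ᵗ⁾‖F g(X) − F★⁽ᵗ⁾ g★(X)‖₂², i.e., the task-diversity condition holds at level ν with ν⁻¹ = μ_X μ_F. -/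

import Mathlib

set_option linter.unusedSectionVars false
set_option linter.unusedVariables false


open Matrix MeasureTheory
open scoped Matrix.Norms.L2Operator

set_option linter.unusedSectionVars false


namespace TCAux

variable {𝓧 : Type*} [MeasurableSpace 𝓧] {μ : Measure 𝓧} {r dY : ℕ}

lemma sum_mul_sum_eq (v w : Fin r → ℝ) (φ ψ : 𝓧 → Fin r → ℝ) (x : 𝓧) :
    (∑ j, v j * φ x j) * (∑ k, w k * ψ x k)
      = ∑ j, ∑ k, v j * w k * (φ x j * ψ x k) := by
  rw [Finset.sum_mul_sum]
  exact Finset.sum_congr rfl fun j _ => Finset.sum_congr rfl fun k _ => by ring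

lemma integrable_sum_mul_sum (v w : Fin r → ℝ) (φ ψ : 𝓧 → Fin r → ℝ)
    (h : ∀ j k, Integrable (fun x => φ x j * ψ x k) μ) :
    Integrable (fun x => (∑ j, v j * φ x j) * (∑ k, w k * ψ x k)) μ := by
  have : (fun x => (∑ j, v j * φ x j) * (∑ k, w k * ψ x k))
      = fun x => ∑ j, ∑ k, v j * w k * (φ x j * ψ x k) := by
    funext x; exact sum_mul_sum_eq v w φ ψ x
  rw [this]
  exact integrable_finset_sum _ fun j _ =>
    integrable_finset_sum _ fun k _ => ((h j k).const_mul _)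

lemma integral_sum_mul_sum (v w : Fin r → ℝ) (φ ψ : 𝓧 → Fin r → ℝ)
    (h : ∀ j k, Integrable (fun x => φ x j * ψ x k) μ) :
    ∫ x, (∑ j, v j * φ x j) * (∑ k, w k * ψ x k) ∂μ
      = ∑ j, ∑ k, v j * w k * ∫ x, φ x j * ψ x k ∂μ := by
  simp_rw [sum_mul_sum_eq v w φ ψ]
  rw [integral_finset_sum _ fun j _ => integrable_finset_sum _ fun k _ => ((h j k).const_mul _)]
  refine Finset.sum_congr rfl fun j _ => ?_
  rw [integral_finset_sum _ fun k _ => ((h j k).const_mul _)]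
  exact Finset.sum_congr rfl fun k _ => integral_const_mul _ _

lemma trace_conj (F H : Matrix (Fin dY) (Fin r) ℝ) (A : Matrix (Fin r) (Fin r) ℝ) :
    Matrix.trace (F * A * Hᵀ) = ∑ i, ∑ j, ∑ k, F i j * A j k * H i k := by
  simp only [Matrix.trace, Matrix.diag, Matrix.mul_apply, Matrix.transpose_apply,
    Finset.sum_mul]
  refine Finset.sum_congr rfl fun i _ => ?_
  rw [Finset.sum_comm]

end TCAux
namespace TCAux

variable {𝓧 : Type*} [MeasurableSpace 𝓧] {μ : Measure 𝓧} {r dY : ℕ}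

lemma key_expand (g h : 𝓧 → Fin r → ℝ)
    (hgg : ∀ i j, Integrable (fun x => g x i * g x j) μ)
    (hgh : ∀ i j, Integrable (fun x => g x i * h x j) μ)
    (hhh : ∀ i j, Integrable (fun x => h x i * h x j) μ)
    (F H : Matrix (Fin dY) (Fin r) ℝ) :
    ∫ x, ∑ i, (F.mulVec (g x) i - H.mulVec (h x) i) ^ 2 ∂μ
      = Matrix.trace (F * (Matrix.of fun i j => ∫ x, g x i * g x j ∂μ) * Fᵀ)
        - 2 * Matrix.trace (F * (Matrix.of fun i j => ∫ x, g x i * h x j ∂μ) * Hᵀ)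
        + Matrix.trace (H * (Matrix.of fun i j => ∫ x, h x i * h x j ∂μ) * Hᵀ) := by
  set big : Fin dY → 𝓧 → ℝ := fun i x =>
    (∑ j, F i j * g x j) * (∑ k, F i k * g x k)
      - 2 * ((∑ j, F i j * g x j) * (∑ k, H i k * h x k))
      + (∑ j, H i j * h x j) * (∑ k, H i k * h x k) with hbig
  have hi1 : ∀ i : Fin dY, Integrable
      (fun x => (∑ j, F i j * g x j) * (∑ k, F i k * g x k)) μ :=
    fun i => integrable_sum_mul_sum _ _ _ _ hgg
  have hi2 : ∀ i : Fin dY, Integrable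
      (fun x => (∑ j, F i j * g x j) * (∑ k, H i k * h x k)) μ :=
    fun i => integrable_sum_mul_sum _ _ _ _ hgh
  have hi3 : ∀ i : Fin dY, Integrable
      (fun x => (∑ j, H i j * h x j) * (∑ k, H i k * h x k)) μ :=
    fun i => integrable_sum_mul_sum _ _ _ _ hhh
  have hibig : ∀ i : Fin dY, Integrable (big i) μ := fun i =>
    ((hi1 i).sub ((hi2 i).const_mul 2)).add (hi3 i)
  have hpt : ∀ x, ∑ i, (F.mulVec (g x) i - H.mulVec (h x) i) ^ 2 = ∑ i, big i x := by
    intro x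
    refine Finset.sum_congr rfl fun i _ => ?_
    simp only [hbig, Matrix.mulVec, dotProduct]
    ring
  calc ∫ x, ∑ i, (F.mulVec (g x) i - H.mulVec (h x) i) ^ 2 ∂μ
      = ∫ x, ∑ i, big i x ∂μ := by simp_rw [hpt]
    _ = ∑ i, ∫ x, big i x ∂μ := integral_finset_sum _ (fun i _ => hibig i)
    _ = ∑ i : Fin dY, ((∑ j, ∑ k, F i j * F i k * ∫ x, g x j * g x k ∂μ)
        - 2 * (∑ j, ∑ k, F i j * H i k * ∫ x, g x j * h x k ∂μ)
        + (∑ j, ∑ k, H i j * H i k * ∫ x, h x j * h x k ∂μ)) := by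
        refine Finset.sum_congr rfl fun i _ => ?_
        simp only [hbig]
        have hB : Integrable (fun x => 2 * ((∑ j, F i j * g x j) * (∑ k, H i k * h x k))) μ :=
          (hi2 i).const_mul 2
        have hAB : Integrable (fun x => (∑ j, F i j * g x j) * (∑ k, F i k * g x k)
            - 2 * ((∑ j, F i j * g x j) * (∑ k, H i k * h x k))) μ := (hi1 i).sub hB
        rw [integral_add hAB (hi3 i), integral_sub (hi1 i) hB, integral_const_mul,
          integral_sum_mul_sum _ _ _ _ hgg, integral_sum_mul_sum _ _ _ _ hgh,
          integral_sum_mul_sum _ _ _ _ hhh]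
    _ = _ := by
        rw [trace_conj, trace_conj, trace_conj, Finset.mul_sum, ← Finset.sum_sub_distrib,
          ← Finset.sum_add_distrib]
        refine Finset.sum_congr rfl fun i _ => ?_
        have e1 : (∑ j, ∑ k, F i j * F i k * ∫ x, g x j * g x k ∂μ)
            = ∑ j, ∑ k, F i j * (Matrix.of fun i j => ∫ x, g x i * g x j ∂μ) j k * F i k :=
          Finset.sum_congr rfl fun j _ => Finset.sum_congr rfl fun k _ => by
            simp only [Matrix.of_apply]; ring
        have e2 : (2 : ℝ) * (∑ j, ∑ k, F i j * H i k * ∫ x, g x j * h x k ∂μ)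
            = 2 * ∑ j, ∑ k, F i j * (Matrix.of fun i j => ∫ x, g x i * h x j ∂μ) j k * H i k := by
          congr 1
          exact Finset.sum_congr rfl fun j _ => Finset.sum_congr rfl fun k _ => by
            simp only [Matrix.of_apply]; ring
        have e3 : (∑ j, ∑ k, H i j * H i k * ∫ x, h x j * h x k ∂μ)
            = ∑ j, ∑ k, H i j * (Matrix.of fun i j => ∫ x, h x i * h x j ∂μ) j k * H i k :=
          Finset.sum_congr rfl fun j _ => Finset.sum_congr rfl fun k _ => by
            simp only [Matrix.of_apply]; ring
        rw [e1, e2, e3]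

end TCAux
namespace TCAux

variable {𝓧 : Type*} [MeasurableSpace 𝓧] {μ : Measure 𝓧} {r dY : ℕ}

lemma psd_trace_nonneg {n : ℕ} {M : Matrix (Fin n) (Fin n) ℝ} (hM : M.PosSemidef) :
    0 ≤ M.trace :=
  Finset.sum_nonneg fun i _ => hM.diag_nonneg

lemma trace_mul_nonneg {n : ℕ} {M N : Matrix (Fin n) (Fin n) ℝ}
    (hM : M.PosSemidef) (hN : N.PosSemidef) : 0 ≤ (M * N).trace := by
  obtain ⟨R, hRherm, hRM⟩ : ∃ R : Matrix (Fin n) (Fin n) ℝ, Rᴴ = R ∧ M = R * R :=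
    open scoped MatrixOrder in
    ⟨CFC.sqrt M, (Matrix.nonneg_iff_posSemidef.mp (CFC.sqrt_nonneg M)).isHermitian,
      (CFC.sqrt_mul_sqrt_self M (Matrix.nonneg_iff_posSemidef.mpr hM)).symm⟩
  subst hRM
  rw [Matrix.mul_assoc, Matrix.trace_mul_comm]
  have h3 : R * N * R = R * N * Rᴴ := by rw [hRherm]
  exact psd_trace_nonneg (h3 ▸ hN.mul_mul_conjTranspose_same R)

lemma gram_transpose (g h : 𝓧 → Fin r → ℝ) :
    (Matrix.of fun i j => ∫ x, h x i * g x j ∂μ)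
      = (Matrix.of fun i j => ∫ x, g x i * h x j ∂μ)ᵀ := by
  ext i j
  simp only [Matrix.of_apply, Matrix.transpose_apply]
  simp_rw [mul_comm]

lemma gram_posSemidef (g : 𝓧 → Fin r → ℝ)
    (hgg : ∀ i j, Integrable (fun x => g x i * g x j) μ) :
    (Matrix.of fun i j => ∫ x, g x i * g x j ∂μ).PosSemidef := by
  refine Matrix.PosSemidef.of_dotProduct_mulVec_nonneg ?_ ?_
  · ext i j
    simp only [Matrix.conjTranspose_apply, Matrix.of_apply, star_trivial]
    simp_rw [mul_comm]
  · intro v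
    have h1 : ∫ x, (∑ j, v j * g x j) * (∑ k, v k * g x k) ∂μ
        = ∑ j, ∑ k, v j * v k * ∫ x, g x j * g x k ∂μ :=
      integral_sum_mul_sum v v g g hgg
    have h0 : (0:ℝ) ≤ ∫ x, (∑ j, v j * g x j) * (∑ k, v k * g x k) ∂μ :=
      integral_nonneg fun x => mul_self_nonneg _
    rw [h1] at h0
    refine le_of_le_of_eq h0 ?_
    simp only [dotProduct, Matrix.mulVec, star_trivial, Matrix.of_apply,
      Finset.mul_sum]
    exact Finset.sum_congr rfl fun j _ => Finset.sum_congr rfl fun k _ => by ring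

lemma schur_posSemidef (g h : 𝓧 → Fin r → ℝ)
    (hgg : ∀ i j, Integrable (fun x => g x i * g x j) μ)
    (hgh : ∀ i j, Integrable (fun x => g x i * h x j) μ)
    (hhh : ∀ i j, Integrable (fun x => h x i * h x j) μ)
    (hdet : IsUnit (Matrix.of fun i j => ∫ x, g x i * g x j ∂μ).det) :
    ((Matrix.of fun i j => ∫ x, h x i * h x j ∂μ)
      - (Matrix.of fun i j => ∫ x, h x i * g x j ∂μ)
        * (Matrix.of fun i j => ∫ x, g x i * g x j ∂μ)⁻¹
        * (Matrix.of fun i j => ∫ x, g x i * h x j ∂μ)).PosSemidef := by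
  set A : Matrix (Fin r) (Fin r) ℝ := Matrix.of fun i j => ∫ x, g x i * g x j ∂μ with hA
  set B : Matrix (Fin r) (Fin r) ℝ := Matrix.of fun i j => ∫ x, g x i * h x j ∂μ with hB
  set C : Matrix (Fin r) (Fin r) ℝ := Matrix.of fun i j => ∫ x, h x i * h x j ∂μ with hC
  have hBT : (Matrix.of fun i j => ∫ x, h x i * g x j ∂μ) = Bᵀ := gram_transpose g h
  rw [hBT]
  have hApsd : A.PosSemidef := gram_posSemidef g hgg
  have hCpsd : C.PosSemidef := gram_posSemidef h hhh
  have hAT : Aᵀ = A := by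
    have := hApsd.isHermitian
    rwa [Matrix.IsHermitian, Matrix.conjTranspose_eq_transpose_of_trivial] at this
  have hAinvT : A⁻¹ᵀ = A⁻¹ := by rw [Matrix.transpose_nonsing_inv, hAT]
  have hAAinv : A * A⁻¹ = 1 := Matrix.mul_nonsing_inv _ hdet
  refine Matrix.PosSemidef.of_dotProduct_mulVec_nonneg ?_ ?_
  · have hCH : Cᴴ = C := hCpsd.isHermitian
    rw [Matrix.IsHermitian, Matrix.conjTranspose_eq_transpose_of_trivial,
      Matrix.transpose_sub, Matrix.transpose_mul, Matrix.transpose_mul,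
      Matrix.transpose_transpose, hAinvT, ← Matrix.mul_assoc]
    rw [Matrix.conjTranspose_eq_transpose_of_trivial] at hCH
    rw [hCH]
  · intro v
    set w : Fin r → ℝ := A⁻¹ *ᵥ (B *ᵥ v) with hw
    have key : ∫ x, (∑ j, v j * h x j - ∑ j, w j * g x j)
          * (∑ k, v k * h x k - ∑ k, w k * g x k) ∂μ
        = v ⬝ᵥ (C *ᵥ v) - 2 * (w ⬝ᵥ (B *ᵥ v)) + w ⬝ᵥ (A *ᵥ w) := by
      have e : ∀ x : 𝓧, (∑ j, v j * h x j - ∑ j, w j * g x j)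
            * (∑ k, v k * h x k - ∑ k, w k * g x k)
          = (∑ j, v j * h x j) * (∑ k, v k * h x k)
            - 2 * ((∑ j, w j * g x j) * (∑ k, v k * h x k))
            + (∑ j, w j * g x j) * (∑ k, w k * g x k) := fun x => by ring
      simp_rw [e]
      have i1 := integrable_sum_mul_sum (μ := μ) v v h h hhh
      have i2 := integrable_sum_mul_sum (μ := μ) w v g h hgh
      have i2' : Integrable (fun x => 2 * ((∑ j, w j * g x j) * (∑ k, v k * h x k))) μ :=
        i2.const_mul 2
      have i3 := integrable_sum_mul_sum (μ := μ) w w g g hgg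
      have i12 : Integrable (fun x => (∑ j, v j * h x j) * (∑ k, v k * h x k)
          - 2 * ((∑ j, w j * g x j) * (∑ k, v k * h x k))) μ := i1.sub i2'
      rw [integral_add i12 i3, integral_sub i1 i2', integral_const_mul,
        integral_sum_mul_sum v v h h hhh, integral_sum_mul_sum w v g h hgh,
        integral_sum_mul_sum w w g g hgg]
      have d1 : v ⬝ᵥ (C *ᵥ v) = ∑ j, ∑ k, v j * v k * ∫ x, h x j * h x k ∂μ := by
        simp only [dotProduct, Matrix.mulVec, hC, Matrix.of_apply, Finset.mul_sum]
        exact Finset.sum_congr rfl fun j _ => Finset.sum_congr rfl fun k _ => by ring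
      have d2 : w ⬝ᵥ (B *ᵥ v) = ∑ j, ∑ k, w j * v k * ∫ x, g x j * h x k ∂μ := by
        simp only [dotProduct, Matrix.mulVec, hB, Matrix.of_apply, Finset.mul_sum]
        exact Finset.sum_congr rfl fun j _ => Finset.sum_congr rfl fun k _ => by ring
      have d3 : w ⬝ᵥ (A *ᵥ w) = ∑ j, ∑ k, w j * w k * ∫ x, g x j * g x k ∂μ := by
        simp only [dotProduct, Matrix.mulVec, hA, Matrix.of_apply, Finset.mul_sum]
        exact Finset.sum_congr rfl fun j _ => Finset.sum_congr rfl fun k _ => by ring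
      rw [d1, d2, d3]
    have hAw : A *ᵥ w = B *ᵥ v := by
      rw [hw, Matrix.mulVec_mulVec, hAAinv, Matrix.one_mulVec]
    have h0 : (0:ℝ) ≤ v ⬝ᵥ (C *ᵥ v) - 2 * (w ⬝ᵥ (B *ᵥ v)) + w ⬝ᵥ (A *ᵥ w) := by
      rw [← key]
      exact integral_nonneg fun x => mul_self_nonneg _
    have hsub : w ⬝ᵥ (A *ᵥ w) = w ⬝ᵥ (B *ᵥ v) := by rw [hAw]
    have hfin : star v ⬝ᵥ ((C - Bᵀ * A⁻¹ * B) *ᵥ v) = v ⬝ᵥ (C *ᵥ v) - w ⬝ᵥ (B *ᵥ v) := by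
      rw [star_trivial, Matrix.sub_mulVec, dotProduct_sub]
      congr 1
      rw [← Matrix.mulVec_mulVec, ← Matrix.mulVec_mulVec, Matrix.dotProduct_mulVec v Bᵀ,
        Matrix.vecMul_transpose, ← hw, dotProduct_comm]
    rw [hfin]
    linarith
end TCAux
namespace TCAux

variable {𝓧 : Type*} [MeasurableSpace 𝓧] {μ : Measure 𝓧} {r dY : ℕ}

lemma iInf_eq (g h : 𝓧 → Fin r → ℝ)
    (hgg : ∀ i j, Integrable (fun x => g x i * g x j) μ)
    (hgh : ∀ i j, Integrable (fun x => g x i * h x j) μ)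
    (hhh : ∀ i j, Integrable (fun x => h x i * h x j) μ)
    (hdet : IsUnit (Matrix.of fun i j => ∫ x, g x i * g x j ∂μ).det)
    (H : Matrix (Fin dY) (Fin r) ℝ) :
    (⨅ F : Matrix (Fin dY) (Fin r) ℝ,
        ∫ x, ∑ i, (F.mulVec (g x) i - H.mulVec (h x) i) ^ 2 ∂μ)
      = Matrix.trace (((Matrix.of fun i j => ∫ x, h x i * h x j ∂μ)
          - (Matrix.of fun i j => ∫ x, h x i * g x j ∂μ)
            * (Matrix.of fun i j => ∫ x, g x i * g x j ∂μ)⁻¹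
            * (Matrix.of fun i j => ∫ x, g x i * h x j ∂μ)) * (Hᵀ * H)) := by
  set A : Matrix (Fin r) (Fin r) ℝ := Matrix.of fun i j => ∫ x, g x i * g x j ∂μ with hA
  set B : Matrix (Fin r) (Fin r) ℝ := Matrix.of fun i j => ∫ x, g x i * h x j ∂μ with hB
  set C : Matrix (Fin r) (Fin r) ℝ := Matrix.of fun i j => ∫ x, h x i * h x j ∂μ with hC
  have hBT : (Matrix.of fun i j => ∫ x, h x i * g x j ∂μ) = Bᵀ := gram_transpose g h
  rw [hBT]
  have hApsd : A.PosSemidef := gram_posSemidef g hgg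
  have hAT : Aᵀ = A := by
    have := hApsd.isHermitian
    rwa [Matrix.IsHermitian, Matrix.conjTranspose_eq_transpose_of_trivial] at this
  have hAinvT : A⁻¹ᵀ = A⁻¹ := by rw [Matrix.transpose_nonsing_inv, hAT]
  have hAAinv : A * A⁻¹ = 1 := Matrix.mul_nonsing_inv _ hdet
  have hAinvA : A⁻¹ * A = 1 := Matrix.nonsing_inv_mul _ hdet
  set τ : ℝ := Matrix.trace ((C - Bᵀ * A⁻¹ * B) * (Hᵀ * H)) with hτ
  have cyc : ∀ X : Matrix (Fin r) (Fin r) ℝ,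
      Matrix.trace (X * (Hᵀ * H)) = Matrix.trace (H * X * Hᵀ) := by
    intro X
    rw [Matrix.trace_mul_comm, ← Matrix.trace_mul_cycle H X Hᵀ]
  have hτ' : τ = Matrix.trace (H * C * Hᵀ) - Matrix.trace (H * (Bᵀ * (A⁻¹ * B)) * Hᵀ) := by
    rw [hτ, Matrix.sub_mul, Matrix.trace_sub, cyc, Matrix.mul_assoc Bᵀ, cyc]
  -- the value of the objective at any F
  have hval : ∀ F : Matrix (Fin dY) (Fin r) ℝ,
      ∫ x, ∑ i, (F.mulVec (g x) i - H.mulVec (h x) i) ^ 2 ∂μ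
        = τ + Matrix.trace ((F - H * Bᵀ * A⁻¹) * A * (F - H * Bᵀ * A⁻¹)ᵀ) := by
    intro F
    rw [key_expand g h hgg hgh hhh F H]
    have hDT : (F - H * Bᵀ * A⁻¹)ᵀ = Fᵀ - A⁻¹ * B * Hᵀ := by
      rw [Matrix.transpose_sub, Matrix.transpose_mul, Matrix.transpose_mul, hAinvT,
        Matrix.transpose_transpose, ← Matrix.mul_assoc]
    have hDA : (F - H * Bᵀ * A⁻¹) * A = F * A - H * Bᵀ := by
      rw [Matrix.sub_mul, Matrix.mul_assoc (H * Bᵀ), hAinvA, Matrix.mul_one]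
    have hexp : (F - H * Bᵀ * A⁻¹) * A * (F - H * Bᵀ * A⁻¹)ᵀ
        = F * A * Fᵀ - F * B * Hᵀ - H * Bᵀ * Fᵀ + H * (Bᵀ * (A⁻¹ * B)) * Hᵀ := by
      rw [hDA, hDT, Matrix.sub_mul, Matrix.mul_sub, Matrix.mul_sub]
      have e1 : F * A * (A⁻¹ * B * Hᵀ) = F * B * Hᵀ := by
        rw [Matrix.mul_assoc F A, ← Matrix.mul_assoc A, ← Matrix.mul_assoc A, hAAinv,
          Matrix.one_mul, ← Matrix.mul_assoc]
      have e2 : H * Bᵀ * (A⁻¹ * B * Hᵀ) = H * (Bᵀ * (A⁻¹ * B)) * Hᵀ := by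
        simp only [Matrix.mul_assoc]
      rw [e1, e2]
      abel
    rw [hexp, hτ']
    rw [Matrix.trace_add, Matrix.trace_sub, Matrix.trace_sub]
    have e3 : Matrix.trace (H * Bᵀ * Fᵀ) = Matrix.trace (F * B * Hᵀ) := by
      rw [← Matrix.trace_transpose (H * Bᵀ * Fᵀ), Matrix.transpose_mul, Matrix.transpose_mul,
        Matrix.transpose_transpose, Matrix.transpose_transpose, ← Matrix.mul_assoc]
    rw [e3]
    ring
  have hpsdD : ∀ F : Matrix (Fin dY) (Fin r) ℝ,
      0 ≤ Matrix.trace ((F - H * Bᵀ * A⁻¹) * A * (F - H * Bᵀ * A⁻¹)ᵀ) := by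
    intro F
    set D := F - H * Bᵀ * A⁻¹
    have : D * A * Dᵀ = D * A * Dᴴ := by
      rw [Matrix.conjTranspose_eq_transpose_of_trivial]
    rw [this]
    exact psd_trace_nonneg (hApsd.mul_mul_conjTranspose_same D)
  have hlb : ∀ F : Matrix (Fin dY) (Fin r) ℝ,
      τ ≤ ∫ x, ∑ i, (F.mulVec (g x) i - H.mulVec (h x) i) ^ 2 ∂μ := by
    intro F
    rw [hval F]
    linarith [hpsdD F]
  refine le_antisymm ?_ (le_ciInf hlb)
  have hmin : ∫ x, ∑ i, ((H * Bᵀ * A⁻¹).mulVec (g x) i - H.mulVec (h x) i) ^ 2 ∂μ = τ := by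
    rw [hval (H * Bᵀ * A⁻¹), sub_self, Matrix.zero_mul, Matrix.zero_mul,
      Matrix.trace_zero, add_zero]
  calc (⨅ F : Matrix (Fin dY) (Fin r) ℝ,
        ∫ x, ∑ i, (F.mulVec (g x) i - H.mulVec (h x) i) ^ 2 ∂μ)
      ≤ ∫ x, ∑ i, ((H * Bᵀ * A⁻¹).mulVec (g x) i - H.mulVec (h x) i) ^ 2 ∂μ :=
        ciInf_le ⟨τ, by rintro y ⟨F, rfl⟩; exact hlb F⟩ _
    _ = τ := hmin

end TCAux
namespace TCAux

lemma quadform_le_opNorm {n : ℕ} (N : Matrix (Fin n) (Fin n) ℝ) (u : Fin n → ℝ) :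
    u ⬝ᵥ (N *ᵥ u) ≤ ‖N‖ * (u ⬝ᵥ u) := by
  set u' : EuclideanSpace ℝ (Fin n) := WithLp.toLp 2 u with hu'
  set Nu' : EuclideanSpace ℝ (Fin n) := WithLp.toLp 2 (N *ᵥ u) with hNu'
  have h1 : u ⬝ᵥ (N *ᵥ u) = inner ℝ u' Nu' := by
    rw [hu', hNu', EuclideanSpace.inner_toLp_toLp, star_trivial, dotProduct_comm]
  have h2 : inner ℝ u' Nu' ≤ ‖u'‖ * ‖Nu'‖ := real_inner_le_norm _ _
  have h3 : ‖Nu'‖ ≤ ‖N‖ * ‖u'‖ := N.l2_opNorm_mulVec u'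
  have h4 : u ⬝ᵥ u = ‖u'‖ * ‖u'‖ := by
    have h5 : inner ℝ u' u' = ‖u'‖ * ‖u'‖ := real_inner_self_eq_norm_mul_norm u'
    rw [← h5, hu', EuclideanSpace.inner_toLp_toLp, star_trivial]
  rw [h1, h4]
  nlinarith [norm_nonneg u', norm_nonneg Nu', norm_nonneg N]

lemma mat_ext_of_mulVec {m n : ℕ} {M N : Matrix (Fin m) (Fin n) ℝ}
    (h : ∀ v, M *ᵥ v = N *ᵥ v) : M = N := by
  ext i j
  have := congrFun (h (Pi.single j 1)) i
  simpa [Matrix.mulVec_single] using this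

lemma head_coverage {r : ℕ} (bF0 bF1T Fp S : Matrix (Fin r) (Fin r) ℝ)
    (hbF0T : bF0ᵀ = bF0) (hbF1TT : bF1Tᵀ = bF1T)
    (hrange : LinearMap.range bF0.mulVecLin ≤ LinearMap.range bF1T.mulVecLin)
    (hFp1 : bF1T * Fp * bF1T = bF1T) (hFp2 : Fp * bF1T * Fp = Fp)
    (hFp3 : (bF1T * Fp)ᵀ = bF1T * Fp) (hFp4 : (Fp * bF1T)ᵀ = Fp * bF1T)
    (hS : S.PosSemidef) (hSS : S * S = Fp) :
    (‖S * bF0 * S‖ • bF1T - bF0).PosSemidef := by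
  set A := bF1T with hAdef
  have t1 : A * Fpᵀ = Fp * A := by
    calc A * Fpᵀ = Aᵀ * Fpᵀ := by rw [hbF1TT]
    _ = (Fp * A)ᵀ := by rw [Matrix.transpose_mul]
    _ = Fp * A := hFp4
  have t2 : Fpᵀ * A = A * Fp := by
    calc Fpᵀ * A = Fpᵀ * Aᵀ := by rw [hbF1TT]
    _ = (A * Fp)ᵀ := by rw [Matrix.transpose_mul]
    _ = A * Fp := hFp3
  have t3 : A * Fpᵀ * A = A := by
    have h := congrArg Matrix.transpose hFp1
    rw [Matrix.transpose_mul, Matrix.transpose_mul, hbF1TT] at h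
    rw [Matrix.mul_assoc]
    exact h
  have hcomm : A * Fp = Fp * A := by
    have c1 : A * Fp = Fp * (Fp * A) * A := by
      calc A * Fp = (A * Fpᵀ * A) * Fp := by rw [t3]
      _ = (A * Fpᵀ) * (A * Fp) := by rw [Matrix.mul_assoc]
      _ = (Fp * A) * (Fpᵀ * A) := by rw [t1, t2]
      _ = Fp * (A * Fpᵀ) * A := by simp only [Matrix.mul_assoc]
      _ = Fp * (Fp * A) * A := by rw [t1]
    have c2 : Fp * A = Fp * (Fp * A) * A := by
      calc Fp * A = Fp * (A * Fpᵀ * A) := by rw [t3]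
      _ = Fp * (A * Fpᵀ) * A := by simp only [Matrix.mul_assoc]
      _ = Fp * (Fp * A) * A := by rw [t1]
    rw [c1, ← c2]
  have hFpT : Fpᵀ = Fp := by
    have hAFpT : A * Fpᵀ = A * Fp := by rw [t1, hcomm]
    have e1 : Fpᵀ = (A * Fp) * Fp := by
      calc Fpᵀ = (Fp * A * Fp)ᵀ := by rw [hFp2]
      _ = Fpᵀ * (Aᵀ * Fpᵀ) := by
          rw [Matrix.transpose_mul, Matrix.transpose_mul]
      _ = Fpᵀ * (A * Fpᵀ) := by rw [hbF1TT]
      _ = Fpᵀ * (A * Fp) := by rw [hAFpT]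
      _ = (Fpᵀ * A) * Fp := by rw [Matrix.mul_assoc]
      _ = (A * Fp) * Fp := by rw [t2]
    have e2 : Fp = (A * Fp) * Fp := by
      calc Fp = Fp * A * Fp := hFp2.symm
      _ = (A * Fp) * Fp := by rw [hcomm]
    rw [e1, ← e2]
  have hST : Sᵀ = S := by
    have := hS.isHermitian
    rwa [Matrix.IsHermitian, Matrix.conjTranspose_eq_transpose_of_trivial] at this
  have hproj : A * Fp * bF0 = bF0 := by
    apply mat_ext_of_mulVec
    intro v
    obtain ⟨w, hw⟩ := hrange ⟨v, rfl⟩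
    simp only [Matrix.mulVecLin_apply] at hw
    calc (A * Fp * bF0) *ᵥ v = (A * Fp) *ᵥ (bF0 *ᵥ v) := (Matrix.mulVec_mulVec _ _ _).symm
    _ = (A * Fp) *ᵥ (A *ᵥ w) := by rw [hw]
    _ = (A * Fp * A) *ᵥ w := Matrix.mulVec_mulVec _ _ _
    _ = A *ᵥ w := by rw [hFp1]
    _ = bF0 *ᵥ v := hw
  have hproj' : bF0 * Fp * A = bF0 := by
    calc bF0 * Fp * A = bF0ᵀ * Fpᵀ * Aᵀ := by rw [hbF0T, hFpT, hbF1TT]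
    _ = (A * Fp * bF0)ᵀ := by
        rw [Matrix.transpose_mul, Matrix.transpose_mul, Matrix.mul_assoc]
    _ = bF0ᵀ := by rw [hproj]
    _ = bF0 := hbF0T
  refine Matrix.PosSemidef.of_dotProduct_mulVec_nonneg ?_ ?_
  · rw [Matrix.IsHermitian, Matrix.conjTranspose_eq_transpose_of_trivial,
      Matrix.transpose_sub, Matrix.transpose_smul, hbF1TT, hbF0T]
  · intro v
    rw [star_trivial, Matrix.sub_mulVec, Matrix.smul_mulVec, dotProduct_sub,
      dotProduct_smul, smul_eq_mul]
    set u : Fin r → ℝ := S *ᵥ (A *ᵥ v) with hu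
    have hASSA : (A * S) * (S * A) = A := by
      calc (A * S) * (S * A) = A * (S * (S * A)) := by simp only [Matrix.mul_assoc]
      _ = A * ((S * S) * A) := by rw [← Matrix.mul_assoc S S A]
      _ = A * (Fp * A) := by rw [hSS]
      _ = A := by rw [← Matrix.mul_assoc, hFp1]
    have hSAT : (S * A)ᵀ = A * S := by rw [Matrix.transpose_mul, hST, hbF1TT]
    have e1 : v ⬝ᵥ (A *ᵥ v) = u ⬝ᵥ u := by
      calc v ⬝ᵥ (A *ᵥ v) = v ⬝ᵥ (((A * S) * (S * A)) *ᵥ v) := by rw [hASSA]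
      _ = v ⬝ᵥ ((A * S) *ᵥ ((S * A) *ᵥ v)) := by rw [Matrix.mulVec_mulVec]
      _ = v ⬝ᵥ ((S * A)ᵀ *ᵥ ((S * A) *ᵥ v)) := by rw [hSAT]
      _ = ((S * A) *ᵥ v) ⬝ᵥ ((S * A) *ᵥ v) := by
          rw [Matrix.dotProduct_mulVec, Matrix.vecMul_transpose]
      _ = u ⬝ᵥ u := by rw [hu, Matrix.mulVec_mulVec]
    have m1 : (S * bF0 * S) * (S * A) = S * bF0 := by
      calc (S * bF0 * S) * (S * A) = S * bF0 * (S * (S * A)) := by simp only [Matrix.mul_assoc]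
      _ = S * bF0 * ((S * S) * A) := by rw [← Matrix.mul_assoc S S A]
      _ = S * bF0 * (Fp * A) := by rw [hSS]
      _ = S * (bF0 * Fp * A) := by simp only [Matrix.mul_assoc]
      _ = S * bF0 := by rw [hproj']
    have m2 : S * (S * A) = Fp * A := by
      rw [← Matrix.mul_assoc, hSS]
    have e2 : v ⬝ᵥ (bF0 *ᵥ v) = u ⬝ᵥ ((S * bF0 * S) *ᵥ u) := by
      have r1 : (S * bF0 * S) *ᵥ u = S *ᵥ (bF0 *ᵥ v) := by
        have mm : S * bF0 * S * S * A = S * bF0 := by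
          calc S * bF0 * S * S * A = S * (bF0 * (S * (S * A))) := by
                simp only [Matrix.mul_assoc]
          _ = S * (bF0 * ((S * S) * A)) := by rw [← Matrix.mul_assoc S S A]
          _ = S * (bF0 * (Fp * A)) := by rw [hSS]
          _ = S * (bF0 * Fp * A) := by rw [← Matrix.mul_assoc bF0 Fp A]
          _ = S * bF0 := by rw [hproj']
        rw [hu, Matrix.mulVec_mulVec, Matrix.mulVec_mulVec, mm, ← Matrix.mulVec_mulVec]
      have r2 : S *ᵥ u = (Fp * A) *ᵥ v := by
        rw [hu, Matrix.mulVec_mulVec, Matrix.mulVec_mulVec, hSS]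
      calc v ⬝ᵥ (bF0 *ᵥ v) = ((A * Fp) *ᵥ (bF0 *ᵥ v)) ⬝ᵥ v := by
            rw [Matrix.mulVec_mulVec, hproj, dotProduct_comm]
      _ = (bF0 *ᵥ v) ⬝ᵥ ((A * Fp)ᵀ *ᵥ v) := by
          rw [Matrix.dotProduct_mulVec (bF0 *ᵥ v), Matrix.vecMul_transpose,
            dotProduct_comm]
      _ = (bF0 *ᵥ v) ⬝ᵥ ((Fp * A) *ᵥ v) := by
          rw [Matrix.transpose_mul, hFpT, hbF1TT]
      _ = (bF0 *ᵥ v) ⬝ᵥ (S *ᵥ u) := by rw [r2]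
      _ = (bF0 *ᵥ v) ⬝ᵥ (Sᵀ *ᵥ u) := by rw [hST]
      _ = (S *ᵥ (bF0 *ᵥ v)) ⬝ᵥ u := by
          rw [Matrix.dotProduct_mulVec, Matrix.vecMul_transpose]
      _ = ((S * bF0 * S) *ᵥ u) ⬝ᵥ u := by rw [r1]
      _ = u ⬝ᵥ ((S * bF0 * S) *ᵥ u) := dotProduct_comm _ _
    have hb := quadform_le_opNorm (S * bF0 * S) u
    rw [e1, e2]
    linarith

end TCAux

/-- Task coverage implies task diversity: if for every `g ∈ G` the Schur complements of the
stacked second-moment matrices satisfy `Σ̄_g⁽⁰⁾ ⪯ μ_X Σ̄_g⁽ᵗ⁾` for every source task `t`,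
and the optimal heads satisfy the range condition with head-coverage coefficient
`μ_F = ‖(𝐅★^{1:T})^{†/2} 𝐅★⁽⁰⁾ (𝐅★^{1:T})^{†/2}‖₂`, then for every `g ∈ G`,
`inf_F E⁽⁰⁾‖F g(X) − F★⁽⁰⁾ g★(X)‖² ≤ (μ_X μ_F / T) Σ_t inf_F E⁽ᵗ⁾‖F g(X) − F★⁽ᵗ⁾ g★(X)‖²`. -/
theorem task_coverage_implies_task_diversity
    {𝓧 : Type*} [MeasurableSpace 𝓧] {T dY r : ℕ} (hT : 0 < T)
    (P : Fin (T + 1) → Measure 𝓧) [∀ t, IsProbabilityMeasure (P t)]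
    (G : Set (𝓧 → Fin r → ℝ)) (gstar : 𝓧 → Fin r → ℝ)
    (Fstar : Fin (T + 1) → Matrix (Fin dY) (Fin r) ℝ)
    -- the Schur complement matrices Σ̄_g⁽ᵗ⁾ of E⁽ᵗ⁾[g g ᵀ] in the stacked covariance of (g, g★)
    (Sbar : Fin (T + 1) → (𝓧 → Fin r → ℝ) → Matrix (Fin r) (Fin r) ℝ)
    (hSbar : ∀ t, ∀ g ∈ G, Sbar t g =
      (Matrix.of fun i j => ∫ x, gstar x i * gstar x j ∂(P t))
        - (Matrix.of fun i j => ∫ x, gstar x i * g x j ∂(P t))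
          * (Matrix.of fun i j => ∫ x, g x i * g x j ∂(P t))⁻¹
          * (Matrix.of fun i j => ∫ x, g x i * gstar x j ∂(P t)))
    (hinv : ∀ t, ∀ g ∈ G, IsUnit (Matrix.of fun i j => ∫ x, g x i * g x j ∂(P t)).det)
    (hint1 : ∀ t, ∀ g ∈ G, ∀ i j, Integrable (fun x => g x i * g x j) (P t))
    (hint2 : ∀ t, ∀ g ∈ G, ∀ i j, Integrable (fun x => g x i * gstar x j) (P t))
    (hint3 : ∀ t, ∀ i j, Integrable (fun x => gstar x i * gstar x j) (P t))
    -- task-coverage condition at level μX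
    (μX : ℝ) (hμX : 0 < μX)
    (hTC : ∀ g ∈ G, ∀ t : Fin T, (μX • Sbar t.succ g - Sbar 0 g).PosSemidef)
    (bF0 bF1T : Matrix (Fin r) (Fin r) ℝ)
    (hbF0 : bF0 = (Fstar 0)ᵀ * Fstar 0)
    (hbF1T : bF1T = (T : ℝ)⁻¹ • ∑ t : Fin T, (Fstar t.succ)ᵀ * Fstar t.succ)
    (hrange : LinearMap.range bF0.mulVecLin ≤ LinearMap.range bF1T.mulVecLin)
    -- Fp is the Moore–Penrose pseudoinverse of 𝐅★^{1:T}, S its psd square root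
    (Fp S : Matrix (Fin r) (Fin r) ℝ)
    (hFp1 : bF1T * Fp * bF1T = bF1T) (hFp2 : Fp * bF1T * Fp = Fp)
    (hFp3 : (bF1T * Fp)ᵀ = bF1T * Fp) (hFp4 : (Fp * bF1T)ᵀ = Fp * bF1T)
    (hS : S.PosSemidef) (hSS : S * S = Fp)
    (μF : ℝ) (hμF : μF = ‖S * bF0 * S‖) :
    ∀ g ∈ G,
      (⨅ F : Matrix (Fin dY) (Fin r) ℝ,
          ∫ x, ∑ i, (F.mulVec (g x) i - (Fstar 0).mulVec (gstar x) i) ^ 2 ∂(P 0))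
        ≤ (μX * μF / T) * ∑ t : Fin T,
            ⨅ F : Matrix (Fin dY) (Fin r) ℝ,
              ∫ x, ∑ i, (F.mulVec (g x) i - (Fstar t.succ).mulVec (gstar x) i) ^ 2
                ∂(P t.succ) := by
  intro g hg
  have hbF0T : bF0ᵀ = bF0 := by
    rw [hbF0, Matrix.transpose_mul, Matrix.transpose_transpose]
  have hbF1TT : bF1Tᵀ = bF1T := by
    rw [hbF1T, Matrix.transpose_smul, Matrix.transpose_sum]
    congr 1
    exact Finset.sum_congr rfl fun t _ => by
      rw [Matrix.transpose_mul, Matrix.transpose_transpose]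
  have hTpos : (0:ℝ) < (T:ℝ) := by exact_mod_cast hT
  have hμF0 : 0 ≤ μF := by rw [hμF]; exact norm_nonneg _
  have hL : (⨅ F : Matrix (Fin dY) (Fin r) ℝ,
        ∫ x, ∑ i, (F.mulVec (g x) i - (Fstar 0).mulVec (gstar x) i) ^ 2 ∂(P 0))
      = Matrix.trace (Sbar 0 g * ((Fstar 0)ᵀ * Fstar 0)) := by
    rw [TCAux.iInf_eq g gstar (hint1 0 g hg) (hint2 0 g hg) (hint3 0) (hinv 0 g hg) (Fstar 0),
      ← hSbar 0 g hg]
  have hR : ∀ t : Fin T, (⨅ F : Matrix (Fin dY) (Fin r) ℝ,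
        ∫ x, ∑ i, (F.mulVec (g x) i - (Fstar t.succ).mulVec (gstar x) i) ^ 2 ∂(P t.succ))
      = Matrix.trace (Sbar t.succ g * ((Fstar t.succ)ᵀ * Fstar t.succ)) := fun t => by
    rw [TCAux.iInf_eq g gstar (hint1 t.succ g hg) (hint2 t.succ g hg) (hint3 t.succ)
      (hinv t.succ g hg) (Fstar t.succ), ← hSbar t.succ g hg]
  have hRs : (∑ t : Fin T, ⨅ F : Matrix (Fin dY) (Fin r) ℝ,
        ∫ x, ∑ i, (F.mulVec (g x) i - (Fstar t.succ).mulVec (gstar x) i) ^ 2 ∂(P t.succ))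
      = ∑ t : Fin T, Matrix.trace (Sbar t.succ g * ((Fstar t.succ)ᵀ * Fstar t.succ)) :=
    Finset.sum_congr rfl fun t _ => hR t
  rw [hL, hRs, ← hbF0]
  have hS0 : (Sbar 0 g).PosSemidef := by
    rw [hSbar 0 g hg]
    exact TCAux.schur_posSemidef g gstar (hint1 0 g hg) (hint2 0 g hg) (hint3 0) (hinv 0 g hg)
  have hFt : ∀ t : Fin (T+1), ((Fstar t)ᵀ * Fstar t).PosSemidef := fun t => by
    have := Matrix.posSemidef_conjTranspose_mul_self (Fstar t)
    rwa [Matrix.conjTranspose_eq_transpose_of_trivial] at this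
  have hcov : (μF • bF1T - bF0).PosSemidef := by
    rw [hμF]
    exact TCAux.head_coverage bF0 bF1T Fp S hbF0T hbF1TT hrange hFp1 hFp2 hFp3 hFp4 hS hSS
  have key1 : Matrix.trace (Sbar 0 g * bF0) ≤ μF * Matrix.trace (Sbar 0 g * bF1T) := by
    have h0 := TCAux.trace_mul_nonneg hS0 hcov
    rw [Matrix.mul_sub, Matrix.trace_sub, Matrix.mul_smul, Matrix.trace_smul, smul_eq_mul] at h0
    linarith
  have key2 : ∀ t : Fin T,
      Matrix.trace (Sbar 0 g * ((Fstar t.succ)ᵀ * Fstar t.succ))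
        ≤ μX * Matrix.trace (Sbar t.succ g * ((Fstar t.succ)ᵀ * Fstar t.succ)) := by
    intro t
    have h0 := TCAux.trace_mul_nonneg (hTC g hg t) (hFt t.succ)
    rw [Matrix.sub_mul, Matrix.trace_sub, Matrix.smul_mul, Matrix.trace_smul, smul_eq_mul] at h0
    linarith
  have key3 : Matrix.trace (Sbar 0 g * bF1T)
      = (T:ℝ)⁻¹ * ∑ t : Fin T,
          Matrix.trace (Sbar 0 g * ((Fstar t.succ)ᵀ * Fstar t.succ)) := by
    rw [hbF1T, Matrix.mul_smul, Matrix.trace_smul, smul_eq_mul, Matrix.mul_sum,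
      Matrix.trace_sum]
  have hsum : (∑ t : Fin T, Matrix.trace (Sbar 0 g * ((Fstar t.succ)ᵀ * Fstar t.succ)))
      ≤ ∑ t : Fin T, μX * Matrix.trace (Sbar t.succ g * ((Fstar t.succ)ᵀ * Fstar t.succ)) :=
    Finset.sum_le_sum fun t _ => key2 t
  calc Matrix.trace (Sbar 0 g * bF0)
      ≤ μF * Matrix.trace (Sbar 0 g * bF1T) := key1
    _ = μF * ((T:ℝ)⁻¹ * ∑ t : Fin T,
          Matrix.trace (Sbar 0 g * ((Fstar t.succ)ᵀ * Fstar t.succ))) := by rw [key3]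
    _ ≤ μF * ((T:ℝ)⁻¹ * ∑ t : Fin T,
          μX * Matrix.trace (Sbar t.succ g * ((Fstar t.succ)ᵀ * Fstar t.succ))) := by
        apply mul_le_mul_of_nonneg_left _ hμF0
        exact mul_le_mul_of_nonneg_left hsum (inv_nonneg.mpr hTpos.le)
    _ = (μX * μF / T) * ∑ t : Fin T,
          Matrix.trace (Sbar t.succ g * ((Fstar t.succ)ᵀ * Fstar t.succ)) := by
        rw [← Finset.mul_sum, div_eq_mul_inv]
        ring
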